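/- On the q-deformed Fock space, the commutator of the left annihilation operator and right creation operator restricted to the n-particle space F_n^q is scalar: [(L_i^q)*, R_j^q] restricted to F_n^q equals δ_{ij}·q^n·id. Consequently, [(L_i^q)*, R_j^q] is a compact operator on F^q. -/
import Mathlib


/-- The algebraic q-deformed Fock space over `ℂ^n`: the free vector space on words
in the letters `1,…,n` (a word of length `k` encodes a basis tensor of `(ℂ^n)^{⊗k}`). -/
abbrev FockSpace (n : ℕ) := List (Fin n) →₀ ℂ

/-- The right creation operator `R_j^q : ξ ↦ ξ ⊗ e_j`. -/
noncomputable def creR (n : ℕ) (j : Fin n) : FockSpace n →ₗ[ℂ] FockSpace n :=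
  Finsupp.lmapDomain ℂ ℂ (fun w : List (Fin n) => w ++ [j])

/-- The left annihilation operator `(L_i^q)*`, the q-adjoint of the left creation
operator, acting by `(L_i^q)*(e_{i_1}⊗…⊗e_{i_k}) = Σ_m q^{m-1} δ_{i,i_m} e_{i_1}⊗…ê_{i_m}…⊗e_{i_k}`. -/
noncomputable def annL (n : ℕ) (q : ℝ) (i : Fin n) : FockSpace n →ₗ[ℂ] FockSpace n :=
  Finsupp.lift (FockSpace n) ℂ (List (Fin n)) fun w =>
    ∑ m : Fin w.length, ((q : ℂ) ^ (m : ℕ)) •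
      (if w.get m = i then Finsupp.single (w.eraseIdx m) (1 : ℂ) else 0)

/-- the commutator `[(L_i^q)*, R_j^q]` acts on each basis tensor of the
m-particle space `F_m^q` (a word `w` of length `m`) as the scalar `δ_{ij} q^m`; i.e.
its restriction to `F_m^q` is `δ_{ij} q^m · id` (in particular, since `|q|<1`, these
scalars tend to `0`, which is why the commutator is compact on the completed Fock space). -/
theorem commutator_annL_creR (n : ℕ) (q : ℝ) (hq : |q| < 1) (i j : Fin n)
    (w : List (Fin n)) :
    (annL n q i ∘ₗ creR n j - creR n j ∘ₗ annL n q i) (Finsupp.single w 1) =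
      (if i = j then ((q : ℂ) ^ w.length) else 0) • Finsupp.single w 1 := by
  have hc : ∀ v : List (Fin n), creR n j (Finsupp.single v 1) = Finsupp.single (v ++ [j]) 1 := by
    intro v; simp [creR, Finsupp.mapDomain_single]
  have ha : ∀ v : List (Fin n), annL n q i (Finsupp.single v 1) =
      ∑ m : Fin v.length, ((q : ℂ) ^ (m : ℕ)) •
        (if v.get m = i then Finsupp.single (v.eraseIdx m) (1 : ℂ) else 0) := by
    intro v; simp [annL]
  simp only [LinearMap.sub_apply, LinearMap.comp_apply, hc, ha, map_sum, map_smul]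
  have hlen : (w ++ [j]).length = w.length + 1 := by simp
  rw [← Equiv.sum_comp (finCongr hlen.symm)]
  rw [Fin.sum_univ_castSucc]
  have h1 : ∀ m : Fin w.length,
      (w ++ [j]).get (finCongr hlen.symm m.castSucc) = w.get m := by
    intro m
    simp [List.getElem_append_left m.isLt]
  have h2 : ∀ m : Fin w.length,
      (w ++ [j]).eraseIdx (finCongr hlen.symm m.castSucc) = (w.eraseIdx m) ++ [j] := by
    intro m
    simp [List.eraseIdx_append_of_lt_length m.isLt]
  have h3 : (w ++ [j]).get (finCongr hlen.symm (Fin.last w.length)) = j := by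
    simp
  have h4 : (w ++ [j]).eraseIdx (finCongr hlen.symm (Fin.last w.length)) = w := by
    simp [List.eraseIdx_append_of_length_le (le_refl w.length)]
  simp only [h1, h2, h3, h4]
  have : ∀ m : Fin w.length,
      ((q:ℂ) ^ (((finCongr hlen.symm) m.castSucc : Fin (w++[j]).length) : ℕ)) •
        (if w.get m = i then Finsupp.single (w.eraseIdx m ++ [j]) (1:ℂ) else 0)
      = ((q:ℂ) ^ (m:ℕ)) • (if w.get m = i then Finsupp.single (w.eraseIdx m ++ [j]) (1:ℂ) else 0) := by
    intro m; simp
  simp only [this]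
  have hlast : (((finCongr hlen.symm) (Fin.last w.length) : Fin (w++[j]).length) : ℕ) = w.length := by simp
  rw [hlast]
  have hmap : ∀ m : Fin w.length,
      creR n j (if w.get m = i then Finsupp.single (w.eraseIdx m) (1:ℂ) else 0)
      = (if w.get m = i then Finsupp.single (w.eraseIdx m ++ [j]) (1:ℂ) else 0) := by
    intro m; split <;> simp [hc]
  simp only [hmap]
  rw [add_sub_cancel_left]
  by_cases h : i = j
  · subst h; simp
  · rw [if_neg h, if_neg (fun hh => h hh.symm)]
    simp
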